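/- Fix an integer q ≥ 1, let w be an integer with 1 ≤ w ≤ min(q, n), and let k₁,…,kₙ ∈ ℕ with k₁,…,k_w ≥ 1 and k_{w+1} = ⋯ = kₙ = 0. Assume f₁(x) = ∑_{m≥0} b_m x^m converges on [−1,1] with c₂ r^m ≤ b_m ≤ c₁ r^m for all m ≥ 0, where 0 < r < 1 and 0 < c₂ ≤ c₁. Set v := k₁ + ⋯ + k_w and μ_{(k),q} := ∑_{α₁+⋯+αₙ=q} (q!/(α₁!⋯αₙ!)) ∏_{i=1}^n λ_{k_i,α_i}. Then there exist constants C_{1,q}, C_{2,q} > 0, depending only on q, n, d, r, c₁, c₂, such that C_{2,q} (r/4)^v ≤ μ_{(k),q} ≤ C_{1,q} qⁿ q! v^q r^v. -/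

import Mathlib

open scoped BigOperators

/-- `powCoef b α m` is the `m`-th Taylor coefficient at `0` of `f₁^α`, where
`f₁(x) = ∑_{m≥0} b m * x^m` (α-fold Cauchy product). -/
def powCoef (b : ℕ → ℝ) (α m : ℕ) : ℝ :=
  ∑ t ∈ Finset.Nat.antidiagonalTuple α m, ∏ i, b (t i)

/-- The surface area of the unit sphere `S^{d-1} ⊆ ℝ^d`, i.e. `2 π^{d/2} / Γ(d/2)`. -/
noncomputable def unitSphereArea (d : ℕ) : ℝ :=
  2 * Real.pi ^ ((d : ℝ) / 2) / Real.Gamma ((d : ℝ) / 2)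

/-- The eigenvalue `λ_{k,α}` associated with the dot-product kernel `f₁^α` on `S^{d-1}`. -/
noncomputable def lamCoef (d : ℕ) (b : ℕ → ℝ) (k α : ℕ) : ℝ :=
  unitSphereArea (d - 1) * Real.Gamma (((d : ℝ) - 1) / 2) / 2 ^ (k + 1) *
    ∑' s : ℕ, powCoef b α (2 * s + k) *
      (((2 * s + k).factorial : ℝ) / ((2 * s).factorial : ℝ)) *
      (Real.Gamma ((s : ℝ) + 1 / 2) / Real.Gamma ((s : ℝ) + (k : ℝ) + (d : ℝ) / 2))

/-- `μ_{(k),q} := ∑_{α₁+⋯+αₙ=q} (q!/(α₁!⋯αₙ!)) ∏_{i=1}^n λ_{k_i,α_i}`. -/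
noncomputable def muQ (d n : ℕ) (b : ℕ → ℝ) (q : ℕ) (k : Fin n → ℕ) : ℝ :=
  ∑ t ∈ Finset.Nat.antidiagonalTuple n q,
    (Nat.multinomial Finset.univ t : ℝ) * ∏ i, lamCoef d b (k i) (t i)

open Finset


-- factorial ratio bound
lemma fact_ratio_nat (s k : ℕ) :
    (2*s+k).factorial * s.factorial ≤ 2^k * ((2*s).factorial * (s+k).factorial) := by
  induction k with
  | zero => simp
  | succ k ih =>
    have h1 : (2*s+(k+1)).factorial = (2*s+k+1) * (2*s+k).factorial := by
      rw [show 2*s+(k+1) = (2*s+k)+1 by ring, Nat.factorial_succ]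
    have h2 : (s+(k+1)).factorial = (s+k+1) * (s+k).factorial := by
      rw [show s+(k+1) = (s+k)+1 by ring, Nat.factorial_succ]
    calc (2*s+(k+1)).factorial * s.factorial
        = (2*s+k+1) * ((2*s+k).factorial * s.factorial) := by rw [h1]; ring
      _ ≤ (2*s+k+1) * (2^k * ((2*s).factorial * (s+k).factorial)) :=
          Nat.mul_le_mul_left _ ih
      _ ≤ (2*(s+k+1)) * (2^k * ((2*s).factorial * (s+k).factorial)) := by
          apply Nat.mul_le_mul_right; omega
      _ = 2^(k+1) * ((2*s).factorial * ((s+k+1) * (s+k).factorial)) := by ring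
      _ = 2^(k+1) * ((2*s).factorial * (s+(k+1)).factorial) := by rw [h2]

lemma fact_ratio_real (s k : ℕ) :
    ((2*s+k).factorial : ℝ)/((2*s).factorial : ℝ) * ((s.factorial : ℝ)/((s+k).factorial : ℝ))
      ≤ 2^k := by
  have h1 : (0:ℝ) < (2*s).factorial := by positivity
  have h2 : (0:ℝ) < (s+k).factorial := by positivity
  rw [div_mul_div_comm, div_le_iff₀ (by positivity)]
  have := fact_ratio_nat s k
  calc ((2*s+k).factorial : ℝ) * (s.factorial : ℝ)
      = (((2*s+k).factorial * s.factorial : ℕ) : ℝ) := by push_cast; ring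
    _ ≤ ((2^k * ((2*s).factorial * (s+k).factorial) : ℕ) : ℝ) := by exact_mod_cast this
    _ = 2^k * ((2*s).factorial * (s+k).factorial) := by push_cast; ring


lemma Gamma_nat_add_half_le (s : ℕ) :
    Real.Gamma ((s:ℝ) + 1/2) ≤ Real.sqrt Real.pi * s.factorial := by
  induction s with
  | zero =>
    rw [show ((0:ℕ):ℝ) + 1/2 = 1/2 by norm_num, Real.Gamma_one_half_eq]
    simp
  | succ s ih =>
    have h0 : ((s:ℝ) + 1/2) ≠ 0 := by positivity
    have key : Real.Gamma ((↑(s+1):ℝ) + 1/2) = ((s:ℝ)+1/2) * Real.Gamma ((s:ℝ)+1/2) := by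
      rw [show ((↑(s+1):ℝ) + 1/2) = ((s:ℝ)+1/2) + 1 by push_cast; ring,
        Real.Gamma_add_one h0]
    rw [key]
    have hΓ : 0 ≤ Real.Gamma ((s:ℝ)+1/2) := le_of_lt (Real.Gamma_pos_of_pos (by positivity))
    calc ((s:ℝ)+1/2) * Real.Gamma ((s:ℝ)+1/2)
        ≤ ((s:ℝ)+1) * (Real.sqrt Real.pi * s.factorial) := by
          apply mul_le_mul (by linarith) ih hΓ (by positivity)
      _ = Real.sqrt Real.pi * ((s+1).factorial) := by
          rw [Nat.factorial_succ]; push_cast; ring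

lemma Gamma_nat_add_ge {d2 : ℝ} (h : 1 ≤ d2) (t : ℕ) :
    Real.Gamma d2 * t.factorial ≤ Real.Gamma ((t:ℝ) + d2) := by
  induction t with
  | zero => simp
  | succ t ih =>
    have h0 : ((t:ℝ) + d2) ≠ 0 := by positivity
    have key : Real.Gamma ((↑(t+1):ℝ) + d2) = ((t:ℝ)+d2) * Real.Gamma ((t:ℝ)+d2) := by
      rw [show ((↑(t+1):ℝ) + d2) = ((t:ℝ)+d2) + 1 by push_cast; ring,
        Real.Gamma_add_one h0]
    rw [key]
    calc Real.Gamma d2 * (t+1).factorial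
        = ((t:ℝ)+1) * (Real.Gamma d2 * t.factorial) := by
          rw [Nat.factorial_succ]; push_cast; ring
      _ ≤ ((t:ℝ)+1) * Real.Gamma ((t:ℝ) + d2) := by
          apply mul_le_mul_of_nonneg_left ih (by positivity)
      _ ≤ ((t:ℝ)+d2) * Real.Gamma ((t:ℝ) + d2) := by
          apply mul_le_mul_of_nonneg_right (by linarith)
            (le_of_lt (Real.Gamma_pos_of_pos (by positivity)))

lemma Gamma_k_le (d : ℕ) (hd : 2 ≤ d) (k : ℕ) :
    Real.Gamma ((k:ℝ) + (d:ℝ)/2) ≤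
      (∏ j ∈ range d, ((j:ℝ)+d)) * 2^k * k.factorial * Real.Gamma ((d:ℝ)/2) := by
  have hd1 : (1:ℝ) ≤ (d:ℝ)/2 := by
    have : (2:ℝ) ≤ d := by exact_mod_cast hd
    linarith
  have hΓd : 0 < Real.Gamma ((d:ℝ)/2) := Real.Gamma_pos_of_pos (by linarith)
  have main : ∀ k : ℕ, Real.Gamma ((k:ℝ) + (d:ℝ)/2) ≤
      (∏ j ∈ range (min k d), ((j:ℝ)+d)) * 2^k * k.factorial * Real.Gamma ((d:ℝ)/2) := by
    intro k
    induction k with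
    | zero => simp
    | succ k ih =>
      have h0 : ((k:ℝ) + (d:ℝ)/2) ≠ 0 := by positivity
      have key : Real.Gamma ((↑(k+1):ℝ) + (d:ℝ)/2)
          = ((k:ℝ)+(d:ℝ)/2) * Real.Gamma ((k:ℝ)+(d:ℝ)/2) := by
        rw [show ((↑(k+1):ℝ) + (d:ℝ)/2) = ((k:ℝ)+(d:ℝ)/2) + 1 by push_cast; ring,
          Real.Gamma_add_one h0]
      rw [key]
      have hΓpos : 0 < Real.Gamma ((k:ℝ)+(d:ℝ)/2) := Real.Gamma_pos_of_pos (by positivity)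
      have hprod_nonneg : (0:ℝ) ≤ ∏ j ∈ range (min k d), ((j:ℝ)+d) := by
        apply Finset.prod_nonneg; intro j _; positivity
      by_cases hkd : k < d
      · have hmin1 : min (k+1) d = k+1 := by omega
        have hmin0 : min k d = k := by omega
        have hp : (∏ j ∈ range (min (k+1) d), ((j:ℝ)+d))
            = (∏ j ∈ range (min k d), ((j:ℝ)+d)) * ((k:ℝ)+d) := by
          rw [hmin1, hmin0, Finset.prod_range_succ]
        rw [hp]
        have step : ((k:ℝ)+(d:ℝ)/2) ≤ ((k:ℝ)+d) * (2 * ((k:ℝ)+1)) := by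
          have hdr : (2:ℝ) ≤ (d:ℝ) := by exact_mod_cast hd
          nlinarith [Nat.cast_nonneg (α := ℝ) k]
        calc ((k:ℝ)+(d:ℝ)/2) * Real.Gamma ((k:ℝ)+(d:ℝ)/2)
            ≤ (((k:ℝ)+d) * (2 * ((k:ℝ)+1))) *
              ((∏ j ∈ range (min k d), ((j:ℝ)+d)) * 2^k * k.factorial * Real.Gamma ((d:ℝ)/2)) := by
              apply mul_le_mul step ih (le_of_lt hΓpos) (by positivity)
          _ = (∏ j ∈ range (min k d), ((j:ℝ)+d)) * ((k:ℝ)+d) * 2^(k+1) *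
              (((k:ℝ)+1) * k.factorial) * Real.Gamma ((d:ℝ)/2) := by ring
          _ = (∏ j ∈ range (min k d), ((j:ℝ)+d)) * ((k:ℝ)+d) * 2^(k+1) *
              (k+1).factorial * Real.Gamma ((d:ℝ)/2) := by
              rw [Nat.factorial_succ]; push_cast; ring
      · have hmin1 : min (k+1) d = min k d := by omega
        rw [hmin1]
        have step : ((k:ℝ)+(d:ℝ)/2) ≤ 2 * ((k:ℝ)+1) := by
          have hdr : (d:ℝ) ≤ (k:ℝ) := by exact_mod_cast (by omega : d ≤ k)
          linarith
        calc ((k:ℝ)+(d:ℝ)/2) * Real.Gamma ((k:ℝ)+(d:ℝ)/2)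
            ≤ (2 * ((k:ℝ)+1)) *
              ((∏ j ∈ range (min k d), ((j:ℝ)+d)) * 2^k * k.factorial * Real.Gamma ((d:ℝ)/2)) := by
              apply mul_le_mul step ih (le_of_lt hΓpos) (by positivity)
          _ = (∏ j ∈ range (min k d), ((j:ℝ)+d)) * 2^(k+1) *
              (((k:ℝ)+1) * k.factorial) * Real.Gamma ((d:ℝ)/2) := by ring
          _ = (∏ j ∈ range (min k d), ((j:ℝ)+d)) * 2^(k+1) *
              (k+1).factorial * Real.Gamma ((d:ℝ)/2) := by
              rw [Nat.factorial_succ]; push_cast; ring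
  calc Real.Gamma ((k:ℝ) + (d:ℝ)/2)
      ≤ (∏ j ∈ range (min k d), ((j:ℝ)+d)) * 2^k * k.factorial * Real.Gamma ((d:ℝ)/2) := main k
    _ ≤ (∏ j ∈ range d, ((j:ℝ)+d)) * 2^k * k.factorial * Real.Gamma ((d:ℝ)/2) := by
        apply mul_le_mul_of_nonneg_right _ (le_of_lt hΓd)
        apply mul_le_mul_of_nonneg_right _ (by positivity)
        apply mul_le_mul_of_nonneg_right _ (by positivity)
        have hsub : min k d ≤ d := min_le_right _ _
        have hsplit := Finset.prod_range_mul_prod_Ico (fun j => ((j:ℝ)+d)) hsub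
        have hone : (1:ℝ) ≤ ∏ j ∈ Finset.Ico (min k d) d, ((j:ℝ)+d) := by
          have h2d : (2:ℝ) ≤ (d:ℝ) := by exact_mod_cast hd
          calc (1:ℝ) = ∏ _j ∈ Finset.Ico (min k d) d, (1:ℝ) := by simp
            _ ≤ ∏ j ∈ Finset.Ico (min k d) d, ((j:ℝ)+d) := by
                apply Finset.prod_le_prod (fun i _ => zero_le_one)
                intro i _
                have : (0:ℝ) ≤ (i:ℝ) := Nat.cast_nonneg i
                linarith
        have hnn : (0:ℝ) ≤ ∏ j ∈ range (min k d), ((j:ℝ)+d) := by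
          apply Finset.prod_nonneg; intro j _; positivity
        calc (∏ j ∈ range (min k d), ((j:ℝ)+d))
            ≤ (∏ j ∈ range (min k d), ((j:ℝ)+d)) * ∏ j ∈ Finset.Ico (min k d) d, ((j:ℝ)+d) :=
              le_mul_of_one_le_right hnn hone
          _ = ∏ j ∈ range d, ((j:ℝ)+d) := hsplit



lemma summable_aux (N : ℕ) {x : ℝ} (h0 : 0 ≤ x) (h1 : x < 1) :
    Summable (fun s : ℕ => ((s:ℝ)+1)^N * x^s) := by
  have hx : ‖x‖ < 1 := by rwa [Real.norm_eq_abs, abs_of_nonneg h0]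
  have h : ∀ s : ℕ, ((s:ℝ)+1)^N * x^s
      = ∑ j ∈ range (N+1), (N.choose j : ℝ) * ((s:ℝ)^j * x^s) := by
    intro s
    rw [add_pow]
    rw [Finset.sum_mul]
    apply Finset.sum_congr rfl
    intro j _
    simp only [one_pow, mul_one]
    ring
  apply Summable.congr _ (fun s => (h s).symm)
  apply summable_sum
  intro j _
  exact (summable_pow_mul_geometric_of_norm_lt_one j hx).mul_left _

lemma summable_g (N : ℕ) {x : ℝ} (h0 : 0 ≤ x) (h1 : x < 1) :
    Summable (fun s : ℕ => (2*(s:ℝ)+1)^N * x^s) := by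
  refine Summable.of_nonneg_of_le (fun s => by positivity) ?_
    ((summable_aux N h0 h1).mul_left (3^N))
  intro s
  have h2 : (2*(s:ℝ)+1)^N ≤ (3*((s:ℝ)+1))^N := by
    apply pow_le_pow_left₀ (by positivity)
    have : (0:ℝ) ≤ (s:ℝ) := Nat.cast_nonneg s
    linarith
  calc (2*(s:ℝ)+1)^N * x^s ≤ (3*((s:ℝ)+1))^N * x^s := by
        apply mul_le_mul_of_nonneg_right h2 (by positivity)
    _ = 3^N * (((s:ℝ)+1)^N * x^s) := by rw [mul_pow]; ring

lemma card_antidiagonalTuple_le (α m : ℕ) :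
    (Finset.Nat.antidiagonalTuple α m).card ≤ (m+1)^α := by
  have key : (Finset.Nat.antidiagonalTuple α m).card ≤
      (Finset.univ : Finset (Fin α → Fin (m+1))).card := by
    apply Finset.card_le_card_of_injOn
      (fun (t : Fin α → ℕ) => (fun i => (⟨min (t i) m, by omega⟩ : Fin (m+1))))
    · intro t _; exact Finset.mem_univ _
    · intro t ht t' ht' hEq
      have hle : ∀ (u : Fin α → ℕ), u ∈ Finset.Nat.antidiagonalTuple α m → ∀ i, u i ≤ m := by
        intro u hu i
        rw [Finset.Nat.mem_antidiagonalTuple] at hu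
        calc u i ≤ ∑ j, u j := Finset.single_le_sum (fun j _ => Nat.zero_le _) (Finset.mem_univ i)
          _ = m := hu
      funext i
      have h1 := congrFun hEq i
      have h2 : min (t i) m = min (t' i) m := by
        simpa using congrArg Fin.val h1
      rw [min_eq_left (hle t ht i), min_eq_left (hle t' ht' i)] at h2
      exact h2
  simpa [Finset.card_univ] using key

section PC
variable {b : ℕ → ℝ} {r c₁ c₂ : ℝ}

lemma prod_geom_bound (c : ℝ) (r : ℝ) (α : ℕ) (t : Fin α → ℕ) :
    ∏ i, (c * r ^ (t i)) = c^α * r ^ (∑ i, t i) := by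
  rw [Finset.prod_mul_distrib, Finset.prod_const, Finset.prod_pow_eq_pow_sum]
  simp [Finset.card_univ]

lemma powCoef_nonneg (hb : ∀ m, 0 ≤ b m) (α m : ℕ) : 0 ≤ powCoef b α m := by
  apply Finset.sum_nonneg
  intro t _
  exact Finset.prod_nonneg (fun i _ => hb (t i))

lemma powCoef_le (hr0 : 0 < r) (hc1 : 0 < c₁) (hbn : ∀ m, 0 ≤ b m)
    (hb : ∀ m, b m ≤ c₁ * r ^ m) (α m : ℕ) :
    powCoef b α m ≤ ((m:ℝ)+1)^α * (c₁^α * r^m) := by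
  have hterm : ∀ t ∈ Finset.Nat.antidiagonalTuple α m, (∏ i, b (t i)) ≤ c₁^α * r^m := by
    intro t ht
    rw [Finset.Nat.mem_antidiagonalTuple] at ht
    calc ∏ i, b (t i) ≤ ∏ i, (c₁ * r ^ (t i)) := by
          apply Finset.prod_le_prod (fun i _ => hbn (t i)) (fun i _ => hb (t i))
      _ = c₁^α * r ^ (∑ i, t i) := prod_geom_bound c₁ r α t
      _ = c₁^α * r^m := by rw [ht]
  calc powCoef b α m ≤ (Finset.Nat.antidiagonalTuple α m).card • (c₁^α * r^m) :=
        Finset.sum_le_card_nsmul _ _ _ hterm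
    _ = ((Finset.Nat.antidiagonalTuple α m).card : ℝ) * (c₁^α * r^m) := by
        rw [nsmul_eq_mul]
    _ ≤ ((m:ℝ)+1)^α * (c₁^α * r^m) := by
        apply mul_le_mul_of_nonneg_right _ (by positivity)
        calc ((Finset.Nat.antidiagonalTuple α m).card : ℝ) ≤ (((m+1)^α : ℕ) : ℝ) := by
              exact_mod_cast card_antidiagonalTuple_le α m
          _ = ((m:ℝ)+1)^α := by push_cast; ring

lemma powCoef_ge (hr0 : 0 < r) (hc2 : 0 < c₂) (hb : ∀ m, c₂ * r ^ m ≤ b m)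
    {α m : ℕ} (h : α ≠ 0 ∨ m = 0) :
    c₂^α * r^m ≤ powCoef b α m := by
  have hbn : ∀ m, 0 ≤ b m := fun m => le_trans (by positivity) (hb m)
  have hnonneg : ∀ t ∈ Finset.Nat.antidiagonalTuple α m, 0 ≤ ∏ i, b (t i) :=
    fun t _ => Finset.prod_nonneg (fun i _ => hbn (t i))
  rcases Nat.eq_zero_or_pos α with hα | hα
  · subst hα
    have hm : m = 0 := by tauto
    subst hm
    have : powCoef b 0 0 = 1 := by
      simp [powCoef, Finset.Nat.antidiagonalTuple_zero_zero]
    rw [this]; simp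
  · set i₀ : Fin α := ⟨0, hα⟩
    set t₀ : Fin α → ℕ := fun i => if i = i₀ then m else 0 with ht₀
    have hmem : t₀ ∈ Finset.Nat.antidiagonalTuple α m := by
      rw [Finset.Nat.mem_antidiagonalTuple]
      simp [ht₀]
    have hlow : c₂^α * r^m ≤ ∏ i, b (t₀ i) := by
      calc c₂^α * r^m = c₂^α * r ^ (∑ i, t₀ i) := by
            rw [show (∑ i, t₀ i) = m by simp [ht₀]]
        _ = ∏ i, (c₂ * r ^ (t₀ i)) := (prod_geom_bound c₂ r α t₀).symm
        _ ≤ ∏ i, b (t₀ i) := by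
            apply Finset.prod_le_prod (fun i _ => by positivity) (fun i _ => hb (t₀ i))
    exact le_trans hlow (Finset.single_le_sum hnonneg hmem)
end PC

section Lam
variable {d : ℕ} {b : ℕ → ℝ} {r c₁ c₂ : ℝ}

/-- the summand inside lamCoef -/
noncomputable def Fterm (d : ℕ) (b : ℕ → ℝ) (k α : ℕ) (s : ℕ) : ℝ :=
  powCoef b α (2 * s + k) *
    (((2 * s + k).factorial : ℝ) / ((2 * s).factorial : ℝ)) *
    (Real.Gamma ((s : ℝ) + 1 / 2) / Real.Gamma ((s : ℝ) + (k : ℝ) + (d : ℝ) / 2))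

lemma lamCoef_eq (k α : ℕ) :
    lamCoef d b k α = unitSphereArea (d - 1) * Real.Gamma (((d : ℝ) - 1) / 2) / 2 ^ (k + 1) *
      ∑' s : ℕ, Fterm d b k α s := rfl

lemma Fterm_nonneg (hd : 2 ≤ d) (hbn : ∀ m, 0 ≤ b m) (k α s : ℕ) :
    0 ≤ Fterm d b k α s := by
  have hdpos : (0:ℝ) < (d:ℝ) := by
    have : (2:ℝ) ≤ (d:ℝ) := by exact_mod_cast hd
    linarith
  have h1 : 0 < Real.Gamma ((s:ℝ) + 1/2) := Real.Gamma_pos_of_pos (by positivity)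
  have h2 : 0 < Real.Gamma ((s:ℝ) + (k:ℝ) + (d:ℝ)/2) := Real.Gamma_pos_of_pos (by positivity)
  have h3 := powCoef_nonneg hbn α (2*s+k)
  rw [Fterm]
  exact mul_nonneg (mul_nonneg h3 (by positivity)) (le_of_lt (div_pos h1 h2))

lemma Fterm_le (hd : 2 ≤ d) (hr0 : 0 < r) (hc1 : 0 < c₁) (hbn : ∀ m, 0 ≤ b m)
    (hb : ∀ m, b m ≤ c₁ * r ^ m) (k α Q : ℕ) (hα : α ≤ Q) (s : ℕ) :
    Fterm d b k α s ≤
      (Real.sqrt Real.pi / Real.Gamma ((d:ℝ)/2) * c₁^α * ((k:ℝ)+1)^α * 2^k * r^k) *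
        ((2*(s:ℝ)+1)^Q * (r^2)^s) := by
  have hd2 : (2:ℝ) ≤ (d:ℝ) := by exact_mod_cast hd
  have hΓd : 0 < Real.Gamma ((d:ℝ)/2) := Real.Gamma_pos_of_pos (by linarith)
  set Cd := Real.sqrt Real.pi / Real.Gamma ((d:ℝ)/2) with hCd
  have hCd0 : 0 < Cd := by
    apply div_pos (Real.sqrt_pos.mpr Real.pi_pos) hΓd
  -- bound on powCoef
  have hP : powCoef b α (2*s+k) ≤ (2*(s:ℝ)+(k:ℝ)+1)^α * (c₁^α * r^(2*s+k)) := by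
    have := powCoef_le hr0 hc1 hbn hb α (2*s+k)
    have hc : ((2*s+k : ℕ):ℝ) = 2*(s:ℝ)+(k:ℝ) := by push_cast; ring
    rwa [hc] at this
  have hPn : 0 ≤ powCoef b α (2*s+k) := powCoef_nonneg hbn α (2*s+k)
  -- bound on the ratio part
  have hfact : (0:ℝ) ≤ ((2*s+k).factorial : ℝ) / ((2*s).factorial : ℝ) := by positivity
  have hΓ2 : Real.Gamma ((d:ℝ)/2) * ((s+k).factorial : ℝ)
      ≤ Real.Gamma ((s:ℝ) + (k:ℝ) + (d:ℝ)/2) := by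
    have := Gamma_nat_add_ge (d2 := (d:ℝ)/2) (by linarith) (s+k)
    have hc : ((s+k:ℕ):ℝ) + (d:ℝ)/2 = (s:ℝ)+(k:ℝ)+(d:ℝ)/2 := by push_cast; ring
    rwa [hc] at this
  have hratio : Real.Gamma ((s:ℝ)+1/2) / Real.Gamma ((s:ℝ)+(k:ℝ)+(d:ℝ)/2)
      ≤ Cd * ((s.factorial : ℝ) / ((s+k).factorial : ℝ)) := by
    have hnum : Real.Gamma ((s:ℝ)+1/2) ≤ Real.sqrt Real.pi * s.factorial :=
      Gamma_nat_add_half_le s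
    have hden : 0 < Real.Gamma ((d:ℝ)/2) * ((s+k).factorial : ℝ) := by positivity
    calc Real.Gamma ((s:ℝ)+1/2) / Real.Gamma ((s:ℝ)+(k:ℝ)+(d:ℝ)/2)
        ≤ (Real.sqrt Real.pi * s.factorial) / (Real.Gamma ((d:ℝ)/2) * ((s+k).factorial : ℝ)) :=
          div_le_div₀ (by positivity) hnum hden hΓ2
      _ = Cd * ((s.factorial : ℝ) / ((s+k).factorial : ℝ)) := by
          rw [hCd]; field_simp
  have hQR : (((2*s+k).factorial : ℝ) / ((2*s).factorial : ℝ)) *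
      (Real.Gamma ((s:ℝ)+1/2) / Real.Gamma ((s:ℝ)+(k:ℝ)+(d:ℝ)/2)) ≤ Cd * 2^k := by
    calc (((2*s+k).factorial : ℝ) / ((2*s).factorial : ℝ)) *
        (Real.Gamma ((s:ℝ)+1/2) / Real.Gamma ((s:ℝ)+(k:ℝ)+(d:ℝ)/2))
        ≤ (((2*s+k).factorial : ℝ) / ((2*s).factorial : ℝ)) *
          (Cd * ((s.factorial : ℝ) / ((s+k).factorial : ℝ))) :=
          mul_le_mul_of_nonneg_left hratio hfact
      _ = Cd * ((((2*s+k).factorial : ℝ) / ((2*s).factorial : ℝ)) *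
          ((s.factorial : ℝ) / ((s+k).factorial : ℝ))) := by ring
      _ ≤ Cd * 2^k := mul_le_mul_of_nonneg_left (fact_ratio_real s k) (le_of_lt hCd0)
  have hQRn : 0 ≤ (((2*s+k).factorial : ℝ) / ((2*s).factorial : ℝ)) *
      (Real.Gamma ((s:ℝ)+1/2) / Real.Gamma ((s:ℝ)+(k:ℝ)+(d:ℝ)/2)) := by
    have h1 : 0 < Real.Gamma ((s:ℝ) + 1/2) := Real.Gamma_pos_of_pos (by positivity)
    have h2 : 0 < Real.Gamma ((s:ℝ) + (k:ℝ) + (d:ℝ)/2) :=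
      Real.Gamma_pos_of_pos (by positivity)
    positivity
  -- exponent bound
  have hexp : (2*(s:ℝ)+(k:ℝ)+1)^α ≤ ((k:ℝ)+1)^α * (2*(s:ℝ)+1)^Q := by
    have hsn : (0:ℝ) ≤ (s:ℝ) := Nat.cast_nonneg s
    have hkn : (0:ℝ) ≤ (k:ℝ) := Nat.cast_nonneg k
    calc (2*(s:ℝ)+(k:ℝ)+1)^α ≤ (((k:ℝ)+1) * (2*(s:ℝ)+1))^α := by
          apply pow_le_pow_left₀ (by linarith)
          nlinarith
      _ = ((k:ℝ)+1)^α * (2*(s:ℝ)+1)^α := mul_pow _ _ _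
      _ ≤ ((k:ℝ)+1)^α * (2*(s:ℝ)+1)^Q := by
          apply mul_le_mul_of_nonneg_left _ (by positivity)
          apply pow_le_pow_right₀ (by linarith) hα
  have hrpow : r^(2*s+k) = (r^2)^s * r^k := by
    rw [pow_add, pow_mul]
  calc Fterm d b k α s
      = powCoef b α (2*s+k) * ((((2*s+k).factorial : ℝ) / ((2*s).factorial : ℝ)) *
        (Real.Gamma ((s:ℝ)+1/2) / Real.Gamma ((s:ℝ)+(k:ℝ)+(d:ℝ)/2))) := by
        rw [Fterm, mul_assoc]
    _ ≤ ((2*(s:ℝ)+(k:ℝ)+1)^α * (c₁^α * r^(2*s+k))) * (Cd * 2^k) :=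
        mul_le_mul hP hQR hQRn (by positivity)
    _ ≤ (((k:ℝ)+1)^α * (2*(s:ℝ)+1)^Q * (c₁^α * r^(2*s+k))) * (Cd * 2^k) := by
        apply mul_le_mul_of_nonneg_right _ (by positivity)
        apply mul_le_mul_of_nonneg_right _ (by positivity)
        exact hexp
    _ = (Cd * c₁^α * ((k:ℝ)+1)^α * 2^k * r^k) * ((2*(s:ℝ)+1)^Q * (r^2)^s) := by
        rw [hrpow]; ring

lemma A_pos (hd : 2 ≤ d) :
    0 < unitSphereArea (d-1) * Real.Gamma (((d:ℝ)-1)/2) := by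
  have h1 : (1:ℝ) ≤ ((d-1:ℕ):ℝ) := by
    have : 1 ≤ d - 1 := by omega
    exact_mod_cast this
  have hd2 : (2:ℝ) ≤ (d:ℝ) := by exact_mod_cast hd
  have hΓ1 : 0 < Real.Gamma (((d-1:ℕ):ℝ)/2) := Real.Gamma_pos_of_pos (by linarith)
  have hΓ2 : 0 < Real.Gamma (((d:ℝ)-1)/2) := Real.Gamma_pos_of_pos (by linarith)
  have hπ : 0 < Real.pi ^ ((((d-1:ℕ)):ℝ)/2) := Real.rpow_pos_of_pos Real.pi_pos _
  unfold unitSphereArea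
  exact mul_pos (div_pos (by linarith) hΓ1) hΓ2

lemma Cc_pos (hd : 2 ≤ d) : (0:ℝ) < ∏ j ∈ range d, ((j:ℝ)+d) := by
  apply Finset.prod_pos
  intro j _
  have hd2 : (2:ℝ) ≤ (d:ℝ) := by exact_mod_cast hd
  have : (0:ℝ) ≤ (j:ℝ) := Nat.cast_nonneg j
  linarith

lemma summable_Fterm (hd : 2 ≤ d) (hr0 : 0 < r) (hr1 : r < 1) (hc1 : 0 < c₁)
    (hbn : ∀ m, 0 ≤ b m) (hb : ∀ m, b m ≤ c₁ * r ^ m) (k α : ℕ) :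
    Summable (Fterm d b k α) := by
  have hx0 : (0:ℝ) ≤ r^2 := by positivity
  have hx1 : r^2 < 1 := by nlinarith
  exact Summable.of_nonneg_of_le (Fterm_nonneg hd hbn k α)
    (Fterm_le hd hr0 hc1 hbn hb k α α le_rfl)
    ((summable_g α hx0 hx1).mul_left _)

lemma lam_nonneg (hd : 2 ≤ d) (hbn : ∀ m, 0 ≤ b m) (k α : ℕ) :
    0 ≤ lamCoef d b k α := by
  rw [lamCoef_eq]
  apply mul_nonneg
  · apply div_nonneg (le_of_lt (A_pos hd)) (by positivity)
  · exact tsum_nonneg (Fterm_nonneg hd hbn k α)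

lemma lam_le (hd : 2 ≤ d) (hr0 : 0 < r) (hr1 : r < 1) (hc1 : 0 < c₁)
    (hbn : ∀ m, 0 ≤ b m) (hb : ∀ m, b m ≤ c₁ * r ^ m) (k α Q : ℕ) (hα : α ≤ Q) :
    lamCoef d b k α ≤
      (unitSphereArea (d-1) * Real.Gamma (((d:ℝ)-1)/2) *
        (Real.sqrt Real.pi / Real.Gamma ((d:ℝ)/2)) * (∑' s : ℕ, (2*(s:ℝ)+1)^Q * (r^2)^s) / 2) *
      (c₁^α * ((k:ℝ)+1)^α * r^k) := by
  have hx0 : (0:ℝ) ≤ r^2 := by positivity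
  have hx1 : r^2 < 1 := by nlinarith
  set A := unitSphereArea (d-1) * Real.Gamma (((d:ℝ)-1)/2) with hA
  set Cd := Real.sqrt Real.pi / Real.Gamma ((d:ℝ)/2) with hCd
  set MQ := ∑' s : ℕ, (2*(s:ℝ)+1)^Q * (r^2)^s with hMQ
  set C := Cd * c₁^α * ((k:ℝ)+1)^α * 2^k * r^k with hC
  have htsum : (∑' s, Fterm d b k α s) ≤ C * MQ := by
    have h1 := Summable.tsum_le_tsum (Fterm_le hd hr0 hc1 hbn hb k α Q hα)
      (summable_Fterm hd hr0 hr1 hc1 hbn hb k α)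
      ((summable_g Q hx0 hx1).mul_left C)
    rwa [tsum_mul_left] at h1
  have hA0 : 0 < A := A_pos hd
  have h2k : (0:ℝ) < 2^(k+1) := by positivity
  rw [lamCoef_eq]
  calc A / 2^(k+1) * (∑' s, Fterm d b k α s)
      ≤ A / 2^(k+1) * (C * MQ) := by
        apply mul_le_mul_of_nonneg_left htsum (by positivity)
    _ = (A * Cd * MQ / 2) * (c₁^α * ((k:ℝ)+1)^α * r^k) := by
        rw [hC, pow_succ]
        have h2kne : ((2:ℝ)^k) ≠ 0 := by positivity
        field_simp

lemma lam_ge (hd : 2 ≤ d) (hr0 : 0 < r) (hr1 : r < 1) (hc1 : 0 < c₁) (hc2 : 0 < c₂)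
    (hbn : ∀ m, 0 ≤ b m) (hb : ∀ m, b m ≤ c₁ * r ^ m) (hb2 : ∀ m, c₂ * r ^ m ≤ b m)
    {k α : ℕ} (h : α ≠ 0 ∨ (α = 0 ∧ k = 0)) :
    (unitSphereArea (d-1) * Real.Gamma (((d:ℝ)-1)/2) * Real.sqrt Real.pi /
      (2 * Real.Gamma ((d:ℝ)/2) * (∏ j ∈ range d, ((j:ℝ)+d)))) *
      c₂^α * (r/4)^k ≤ lamCoef d b k α := by
  have hd2 : (2:ℝ) ≤ (d:ℝ) := by exact_mod_cast hd
  set A := unitSphereArea (d-1) * Real.Gamma (((d:ℝ)-1)/2) with hA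
  set Cc := ∏ j ∈ range d, ((j:ℝ)+d) with hCc
  have hA0 : 0 < A := A_pos hd
  have hCc0 : 0 < Cc := Cc_pos hd
  have hΓd : 0 < Real.Gamma ((d:ℝ)/2) := Real.Gamma_pos_of_pos (by linarith)
  have hγpos : 0 < Real.Gamma ((k:ℝ) + (d:ℝ)/2) := Real.Gamma_pos_of_pos (by positivity)
  have hπ : 0 < Real.sqrt Real.pi := Real.sqrt_pos.mpr Real.pi_pos
  -- lower bound for Fterm at 0
  have hF0 : (c₂^α * r^k) * ((k.factorial : ℝ)) *
      (Real.sqrt Real.pi / (Cc * 2^k * k.factorial * Real.Gamma ((d:ℝ)/2)))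
      ≤ Fterm d b k α 0 := by
    have hF0eq : Fterm d b k α 0 = powCoef b α k * ((k.factorial : ℝ)) *
        (Real.sqrt Real.pi / Real.Gamma ((k:ℝ) + (d:ℝ)/2)) := by
      rw [Fterm]
      norm_num [Real.Gamma_one_half_eq]
    rw [hF0eq]
    have hpc : c₂^α * r^k ≤ powCoef b α k := by
      apply powCoef_ge hr0 hc2 hb2
      rcases h with h | ⟨h1, h2⟩
      · exact Or.inl h
      · exact Or.inr h2
    have hγle : Real.Gamma ((k:ℝ) + (d:ℝ)/2) ≤ Cc * 2^k * k.factorial * Real.Gamma ((d:ℝ)/2) :=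
      Gamma_k_le d hd k
    have hratio : Real.sqrt Real.pi / (Cc * 2^k * k.factorial * Real.Gamma ((d:ℝ)/2))
        ≤ Real.sqrt Real.pi / Real.Gamma ((k:ℝ) + (d:ℝ)/2) :=
      div_le_div_of_nonneg_left (le_of_lt hπ) hγpos hγle
    apply mul_le_mul
    · apply mul_le_mul_of_nonneg_right hpc (by positivity)
    · exact hratio
    · positivity
    · have := powCoef_nonneg hbn α k
      positivity
  have hle_tsum : Fterm d b k α 0 ≤ ∑' s, Fterm d b k α s :=
    Summable.le_tsum (summable_Fterm hd hr0 hr1 hc1 hbn hb k α) 0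
      (fun s _ => Fterm_nonneg hd hbn k α s)
  rw [lamCoef_eq]
  calc (A * Real.sqrt Real.pi / (2 * Real.Gamma ((d:ℝ)/2) * Cc)) * c₂^α * (r/4)^k
      = A / 2^(k+1) * ((c₂^α * r^k) * ((k.factorial : ℝ)) *
        (Real.sqrt Real.pi / (Cc * 2^k * k.factorial * Real.Gamma ((d:ℝ)/2)))) := by
        have hfne : ((k.factorial : ℝ)) ≠ 0 := by positivity
        have h2ne : ((2:ℝ)^k) ≠ 0 := by positivity
        rw [div_pow, pow_succ, show (4:ℝ) = 2*2 by norm_num, mul_pow]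
        field_simp
    _ ≤ A / 2^(k+1) * (Fterm d b k α 0) := by
        apply mul_le_mul_of_nonneg_left hF0 (by positivity)
    _ ≤ A / 2^(k+1) * (∑' s, Fterm d b k α s) := by
        apply mul_le_mul_of_nonneg_left hle_tsum (by positivity)
end Lam

/-- Fix `q ≥ 1` and `1 ≤ w ≤ min(q,n)`; let `k₁,…,kₙ` with `k_i ≥ 1`
for `i ≤ w` and `k_i = 0` for `i > w`. Under the geometric bounds on `b`, with
`v := k₁ + ⋯ + k_w`, there exist constants `C_{1,q}, C_{2,q} > 0` depending only on
`q, n, d, r, c₁, c₂` such that `C_{2,q} (r/4)^v ≤ μ_{(k),q} ≤ C_{1,q} qⁿ q! v^q r^v`. -/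
theorem stmt_6 (d n : ℕ) (hd : 2 ≤ d) (hn : 1 ≤ n) (q : ℕ) (hq : 1 ≤ q)
    (r c₁ c₂ : ℝ) (hr0 : 0 < r) (hr1 : r < 1) (hc2 : 0 < c₂) (hcc : c₂ ≤ c₁) :
    ∃ C₁ C₂ : ℝ, 0 < C₁ ∧ 0 < C₂ ∧
      ∀ b : ℕ → ℝ,
        (∀ x ∈ Set.Icc (-1 : ℝ) 1, Summable fun m : ℕ => b m * x ^ m) →
        (∀ m : ℕ, c₂ * r ^ m ≤ b m ∧ b m ≤ c₁ * r ^ m) →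
        ∀ w : ℕ, 1 ≤ w → w ≤ min q n →
          ∀ k : Fin n → ℕ,
            (∀ i : Fin n, (i : ℕ) < w → 1 ≤ k i) →
            (∀ i : Fin n, w ≤ (i : ℕ) → k i = 0) →
            C₂ * (r / 4) ^ (∑ i, k i) ≤ muQ d n b q k ∧
            muQ d n b q k ≤
              C₁ * (q : ℝ) ^ n * (q.factorial : ℝ) * ((∑ i, k i : ℕ) : ℝ) ^ q *
                r ^ (∑ i, k i) := by
  have hd2 : (2:ℝ) ≤ (d:ℝ) := by exact_mod_cast hd
  have hc1 : 0 < c₁ := lt_of_lt_of_le hc2 hcc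
  have hx0 : (0:ℝ) ≤ r^2 := by positivity
  have hx1 : r^2 < 1 := by nlinarith
  set A := unitSphereArea (d-1) * Real.Gamma (((d:ℝ)-1)/2) with hA
  have hA0 : 0 < A := A_pos hd
  have hΓd : 0 < Real.Gamma ((d:ℝ)/2) := Real.Gamma_pos_of_pos (by linarith)
  have hπ : 0 < Real.sqrt Real.pi := Real.sqrt_pos.mpr Real.pi_pos
  set Cd := Real.sqrt Real.pi / Real.Gamma ((d:ℝ)/2) with hCd
  have hCd0 : 0 < Cd := div_pos hπ hΓd
  set Cc := ∏ j ∈ range d, ((j:ℝ)+d) with hCc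
  have hCc0 : 0 < Cc := Cc_pos hd
  set M := ∑' s : ℕ, (2*(s:ℝ)+1)^q * (r^2)^s with hM
  have hM1 : (1:ℝ) ≤ M := by
    have h00 : (2*((0:ℕ):ℝ)+1)^q * (r^2)^(0:ℕ) = 1 := by norm_num
    have h01 := Summable.le_tsum (summable_g q hx0 hx1) 0 (fun s _ => by positivity)
    rw [h00] at h01
    exact h01
  set Kl := A * Cd * M / 2 with hKl
  have hKl0 : 0 < Kl := by
    apply div_pos (mul_pos (mul_pos hA0 hCd0) (lt_of_lt_of_le one_pos hM1)) two_pos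
  set B := A * Real.sqrt Real.pi / (2 * Real.Gamma ((d:ℝ)/2) * Cc) with hB
  have hB0 : 0 < B := div_pos (mul_pos hA0 hπ) (by positivity)
  refine ⟨((q:ℝ)+1)^n * (q.factorial : ℝ) * Kl^n * c₁^q * 2^q, B^n * c₂^q,
    by positivity, by positivity, ?_⟩
  intro b _hconv hb w hw1 hw2 k hk1 hk2
  have hb_up : ∀ m, b m ≤ c₁ * r^m := fun m => (hb m).2
  have hb_lo : ∀ m, c₂ * r^m ≤ b m := fun m => (hb m).1
  have hbn : ∀ m, 0 ≤ b m := fun m => le_trans (by positivity) (hb_lo m)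
  set v := ∑ i, k i with hv
  have hwq : w ≤ q := le_trans hw2 (min_le_left _ _)
  have hwn : w ≤ n := le_trans hw2 (min_le_right _ _)
  have hk0 : 1 ≤ k ⟨0, hn⟩ := hk1 ⟨0, hn⟩ (by show 0 < w; omega)
  have hv1 : 1 ≤ v :=
    le_trans hk0 (Finset.single_le_sum (fun i _ => Nat.zero_le (k i)) (Finset.mem_univ _))
  have hvR : (1:ℝ) ≤ (v:ℝ) := by exact_mod_cast hv1
  have hkiv : ∀ i, ((k i : ℕ):ℝ) ≤ (v:ℝ) := by
    intro i
    exact_mod_cast Finset.single_le_sum (f := k) (fun i _ => Nat.zero_le _) (Finset.mem_univ i)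
  constructor
  · -- lower bound
    set α₀ : Fin n → ℕ :=
      fun i => (if (i:ℕ) < w then 1 else 0) + (if i = (⟨0, hn⟩ : Fin n) then q - w else 0)
      with hα₀
    have hsum1 : (∑ i : Fin n, if ((i : Fin n):ℕ) < w then 1 else 0) = w := by
      rw [Fin.sum_univ_eq_sum_range (fun j => if j < w then 1 else 0) n]
      rw [← Finset.sum_subset (Finset.range_subset_range.mpr hwn)
        (f := fun j => if j < w then 1 else 0)]
      · rw [Finset.sum_congr rfl (fun j hj => if_pos (Finset.mem_range.mp hj))]
        simp
      · intro x _ hx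
        rw [Finset.mem_range, not_lt] at hx
        exact if_neg (not_lt.mpr hx)
    have hsum2 : (∑ i : Fin n, if i = (⟨0, hn⟩ : Fin n) then q - w else 0) = q - w := by
      simp
    have hα₀sum : ∑ i, α₀ i = q := by
      rw [hα₀, Finset.sum_add_distrib, hsum1, hsum2]
      omega
    have hα₀mem : α₀ ∈ Finset.Nat.antidiagonalTuple n q :=
      Finset.Nat.mem_antidiagonalTuple.mpr hα₀sum
    have hα₀cond : ∀ i, α₀ i ≠ 0 ∨ (α₀ i = 0 ∧ k i = 0) := by
      intro i
      by_cases hi : (i:ℕ) < w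
      · left
        simp only [hα₀, if_pos hi]
        omega
      · right
        have hik : k i = 0 := hk2 i (by omega)
        have hne : i ≠ (⟨0, hn⟩ : Fin n) := by
          intro hEq
          rw [hEq] at hi
          simp at hi
          omega
        constructor
        · simp [hα₀, if_neg hi, if_neg hne]
        · exact hik
    have hprod_eq : ∏ i, (B * (c₂^(α₀ i) * (r/4)^(k i))) = B^n * (c₂^q * (r/4)^v) := by
      rw [Finset.prod_mul_distrib, Finset.prod_mul_distrib, Finset.prod_const,
        Finset.prod_pow_eq_pow_sum, Finset.prod_pow_eq_pow_sum, hα₀sum, Finset.card_univ]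
      simp [hv]
    have hprod_le : ∏ i, (B * (c₂^(α₀ i) * (r/4)^(k i))) ≤ ∏ i, lamCoef d b (k i) (α₀ i) := by
      apply Finset.prod_le_prod (fun i _ => by positivity)
      intro i _
      have := lam_ge hd hr0 hr1 hc1 hc2 hbn hb_up hb_lo (hα₀cond i)
      calc B * (c₂^(α₀ i) * (r/4)^(k i)) = B * c₂^(α₀ i) * (r/4)^(k i) := by ring
        _ ≤ lamCoef d b (k i) (α₀ i) := this
    have hmult1 : (1:ℝ) ≤ (Nat.multinomial Finset.univ α₀ : ℝ) := by
      exact_mod_cast Nat.succ_le_of_lt (Nat.multinomial_pos _ _)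
    have hprodln : 0 ≤ ∏ i, lamCoef d b (k i) (α₀ i) :=
      Finset.prod_nonneg (fun i _ => lam_nonneg hd hbn _ _)
    have hterm_le : ∏ i, lamCoef d b (k i) (α₀ i) ≤
        (Nat.multinomial Finset.univ α₀ : ℝ) * ∏ i, lamCoef d b (k i) (α₀ i) :=
      le_mul_of_one_le_left hprodln hmult1
    have hsingle : (Nat.multinomial Finset.univ α₀ : ℝ) * ∏ i, lamCoef d b (k i) (α₀ i)
        ≤ muQ d n b q k := by
      apply Finset.single_le_sum
        (f := fun t => (Nat.multinomial Finset.univ t : ℝ) * ∏ i, lamCoef d b (k i) (t i))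
        _ hα₀mem
      intro t _
      apply mul_nonneg (Nat.cast_nonneg _)
      exact Finset.prod_nonneg (fun i _ => lam_nonneg hd hbn _ _)
    calc B^n * c₂^q * (r/4)^v = B^n * (c₂^q * (r/4)^v) := by ring
      _ = ∏ i, (B * (c₂^(α₀ i) * (r/4)^(k i))) := hprod_eq.symm
      _ ≤ ∏ i, lamCoef d b (k i) (α₀ i) := hprod_le
      _ ≤ (Nat.multinomial Finset.univ α₀ : ℝ) * ∏ i, lamCoef d b (k i) (α₀ i) := hterm_le
      _ ≤ muQ d n b q k := hsingle
  · -- upper bound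
    have hterm : ∀ t ∈ Finset.Nat.antidiagonalTuple n q,
        (Nat.multinomial Finset.univ t : ℝ) * ∏ i, lamCoef d b (k i) (t i) ≤
          (q.factorial : ℝ) * (Kl^n * (c₁^q * (((v:ℝ)+1)^q * r^v))) := by
      intro t ht
      rw [Finset.Nat.mem_antidiagonalTuple] at ht
      have hti : ∀ i, t i ≤ q := fun i =>
        ht ▸ Finset.single_le_sum (f := t) (fun j _ => Nat.zero_le _) (Finset.mem_univ i)
      have hprod1 : ∏ i, lamCoef d b (k i) (t i) ≤
          ∏ i, (Kl * (c₁^(t i) * (((k i : ℕ):ℝ)+1)^(t i) * r^(k i))) := by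
        apply Finset.prod_le_prod (fun i _ => lam_nonneg hd hbn _ _)
        intro i _
        have h2 : lamCoef d b (k i) (t i) ≤
            Kl * (c₁^(t i) * (((k i : ℕ):ℝ)+1)^(t i) * r^(k i)) := by
          rw [hKl, hA, hCd, hM]
          exact lam_le hd hr0 hr1 hc1 hbn hb_up (k i) (t i) q (hti i)
        exact h2
      have hprod2 : ∏ i, (Kl * (c₁^(t i) * (((k i : ℕ):ℝ)+1)^(t i) * r^(k i)))
          = Kl^n * (c₁^q * ((∏ i, (((k i : ℕ):ℝ)+1)^(t i)) * r^v)) := by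
        rw [Finset.prod_mul_distrib, Finset.prod_mul_distrib, Finset.prod_mul_distrib,
          Finset.prod_const, Finset.prod_pow_eq_pow_sum, Finset.prod_pow_eq_pow_sum,
          ht, Finset.card_univ, Fintype.card_fin, ← hv]
        ring
      have hmid : ∏ i, (((k i : ℕ):ℝ)+1)^(t i) ≤ ((v:ℝ)+1)^q := by
        calc ∏ i, (((k i : ℕ):ℝ)+1)^(t i) ≤ ∏ i, ((v:ℝ)+1)^(t i) := by
              apply Finset.prod_le_prod (fun i _ => by positivity)
              intro i _
              apply pow_le_pow_left₀ (by positivity)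
              have := hkiv i
              linarith
          _ = ((v:ℝ)+1)^(∑ i, t i) := Finset.prod_pow_eq_pow_sum _ _ _
          _ = ((v:ℝ)+1)^q := by rw [ht]
      have hmult : (Nat.multinomial Finset.univ t : ℝ) ≤ (q.factorial : ℝ) := by
        have h1 : Nat.multinomial Finset.univ t ≤ q.factorial := by
          have hspec := Nat.multinomial_spec Finset.univ t
          rw [ht] at hspec
          calc Nat.multinomial Finset.univ t
              ≤ (∏ i, (t i).factorial) * Nat.multinomial Finset.univ t :=
                Nat.le_mul_of_pos_left _ (Finset.prod_pos (fun i _ => Nat.factorial_pos _))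
            _ = q.factorial := hspec
        exact_mod_cast h1
      have hprodln : 0 ≤ ∏ i, lamCoef d b (k i) (t i) :=
        Finset.prod_nonneg (fun i _ => lam_nonneg hd hbn _ _)
      refine mul_le_mul hmult ?_ hprodln (Nat.cast_nonneg _)
      calc ∏ i, lamCoef d b (k i) (t i)
          ≤ Kl^n * (c₁^q * ((∏ i, (((k i : ℕ):ℝ)+1)^(t i)) * r^v)) := by
            rw [← hprod2]; exact hprod1
        _ ≤ Kl^n * (c₁^q * (((v:ℝ)+1)^q * r^v)) := by
            apply mul_le_mul_of_nonneg_left _ (by positivity)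
            apply mul_le_mul_of_nonneg_left _ (by positivity)
            apply mul_le_mul_of_nonneg_right hmid (by positivity)
    have hcard : ((Finset.Nat.antidiagonalTuple n q).card : ℝ) ≤ ((q:ℝ)+1)^n := by
      calc ((Finset.Nat.antidiagonalTuple n q).card : ℝ) ≤ (((q+1)^n : ℕ) : ℝ) := by
            exact_mod_cast card_antidiagonalTuple_le n q
        _ = ((q:ℝ)+1)^n := by push_cast; ring
    have hμ : muQ d n b q k ≤
        ((Finset.Nat.antidiagonalTuple n q).card : ℝ) *
          ((q.factorial : ℝ) * (Kl^n * (c₁^q * (((v:ℝ)+1)^q * r^v)))) := by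
      have := Finset.sum_le_card_nsmul (Finset.Nat.antidiagonalTuple n q)
        (fun t => (Nat.multinomial Finset.univ t : ℝ) * ∏ i, lamCoef d b (k i) (t i))
        _ hterm
      rw [nsmul_eq_mul] at this
      exact this
    have hv2 : ((v:ℝ)+1)^q ≤ 2^q * (v:ℝ)^q := by
      calc ((v:ℝ)+1)^q ≤ (2*(v:ℝ))^q := by
            apply pow_le_pow_left₀ (by positivity)
            linarith
        _ = 2^q * (v:ℝ)^q := mul_pow _ _ _
    have hqn1 : (1:ℝ) ≤ (q:ℝ)^n * (q.factorial : ℝ) := by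
      have h1 : (1:ℝ) ≤ (q:ℝ) := by exact_mod_cast hq
      have h2 : (1:ℝ) ≤ (q.factorial : ℝ) := by
        have h3 := q.factorial_pos
        exact_mod_cast h3
      calc (1:ℝ) = 1 * 1 := by ring
        _ ≤ (q:ℝ)^n * (q.factorial : ℝ) := by
            apply mul_le_mul (one_le_pow₀ h1) h2 zero_le_one (by positivity)
    calc muQ d n b q k
        ≤ ((Finset.Nat.antidiagonalTuple n q).card : ℝ) *
          ((q.factorial : ℝ) * (Kl^n * (c₁^q * (((v:ℝ)+1)^q * r^v)))) := hμ
      _ ≤ ((q:ℝ)+1)^n * ((q.factorial : ℝ) * (Kl^n * (c₁^q * (((v:ℝ)+1)^q * r^v)))) := by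
          apply mul_le_mul_of_nonneg_right hcard
          positivity
      _ ≤ ((q:ℝ)+1)^n * ((q.factorial : ℝ) * (Kl^n * (c₁^q * ((2^q * (v:ℝ)^q) * r^v)))) := by
          apply mul_le_mul_of_nonneg_left _ (by positivity)
          apply mul_le_mul_of_nonneg_left _ (by positivity)
          apply mul_le_mul_of_nonneg_left _ (by positivity)
          apply mul_le_mul_of_nonneg_left _ (by positivity)
          apply mul_le_mul_of_nonneg_right hv2 (by positivity)
      _ = (((q:ℝ)+1)^n * (q.factorial : ℝ) * Kl^n * c₁^q * 2^q) * (v:ℝ)^q * r^v * 1 := by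
          ring
      _ ≤ (((q:ℝ)+1)^n * (q.factorial : ℝ) * Kl^n * c₁^q * 2^q) * (v:ℝ)^q * r^v *
          ((q:ℝ)^n * (q.factorial : ℝ)) := by
          apply mul_le_mul_of_nonneg_left hqn1 (by positivity)
      _ = (((q:ℝ)+1)^n * (q.factorial : ℝ) * Kl^n * c₁^q * 2^q) * (q:ℝ)^n *
          (q.factorial : ℝ) * (v:ℝ)^q * r^v := by ring
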